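/- A standardized DFA ⟨Z_n,{a,b}⟩ is completely reachable if and only if either H₁ = Z_n, or no proper subgroup of (Z_n,+) containing H₁ is a-invariant, where H₁ is the subgroup generated by the difference set D₁. -/

import Mathlib

/-- Action of a letter: `true` is `b : q ↦ q+1`, `false` is `a`. -/
def act {n : ℕ} (a : ZMod n → ZMod n) (q : ZMod n) (c : Bool) : ZMod n :=
  if c then q + 1 else a q

/-- Action of a word on a state. -/
def wact {n : ℕ} (a : ZMod n → ZMod n) (w : List Bool) (q : ZMod n) : ZMod n :=
  w.foldl (act a) q

/-- Excluded set of a word. -/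
def excl {n : ℕ} (a : ZMod n → ZMod n) (w : List Bool) : Set (ZMod n) :=
  {q | ∀ p, wact a w p ≠ q}

/-- Duplicate set of a word. -/
def dupl {n : ℕ} (a : ZMod n → ZMod n) (w : List Bool) : Set (ZMod n) :=
  {p | ∃ q₁ q₂, q₁ ≠ q₂ ∧ wact a w q₁ = p ∧ wact a w q₂ = p}

/-- Complete reachability for a standardized binary DFA on `ZMod n`. -/
def CompletelyReachable {n : ℕ} (a : ZMod n → ZMod n) : Prop :=
  ∀ S : Set (ZMod n), S.Nonempty → ∃ w : List Bool, Set.range (wact a w) = S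

/-- Standardized DFA: `a` has defect 1 with excluded state `0`, and `0·a = dupl(a)`,
i.e. `a 0` has a second preimage `r ≠ 0`. -/
def Standardized {n : ℕ} (a : ZMod n → ZMod n) : Prop :=
  Set.range a = {(0 : ZMod n)}ᶜ ∧ ∃ r : ZMod n, r ≠ 0 ∧ a r = a 0

/-- Edge of the Rystsov graph: for some word of defect 1, `q` is the excluded state
and `p` the duplicate state. -/
def RysEdge {n : ℕ} (a : ZMod n → ZMod n) (q p : ZMod n) : Prop :=
  ∃ w : List Bool, excl a w = {q} ∧ dupl a w = {p}

/-- The difference set `D₁`. -/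
def D1 {n : ℕ} (a : ZMod n → ZMod n) : Set (ZMod n) :=
  {p | RysEdge a 0 p}

namespace CRAux

open Set

variable {n : ℕ}

theorem act_true (a : ZMod n → ZMod n) (q : ZMod n) : act a q true = q + 1 := by
  simp [act]

theorem act_false (a : ZMod n → ZMod n) (q : ZMod n) : act a q false = a q := by
  simp [act]

theorem wact_nil (a : ZMod n → ZMod n) (q : ZMod n) : wact a [] q = q := rfl

theorem wact_append (a : ZMod n → ZMod n) (w w' : List Bool) (q : ZMod n) :
    wact a (w ++ w') q = wact a w' (wact a w q) :=
  List.foldl_append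

theorem wact_snoc_false (a : ZMod n → ZMod n) (w : List Bool) (q : ZMod n) :
    wact a (w ++ [false]) q = a (wact a w q) := by
  rw [wact_append]
  show act a (wact a w q) false = _
  rw [act_false]

theorem wact_snoc_true (a : ZMod n → ZMod n) (w : List Bool) (q : ZMod n) :
    wact a (w ++ [true]) q = wact a w q + 1 := by
  rw [wact_append]
  show act a (wact a w q) true = _
  rw [act_true]

theorem wact_replicate (a : ZMod n → ZMod n) :
    ∀ (k : ℕ) (q : ZMod n), wact a (List.replicate k true) q = q + (k : ZMod n)
  | 0, q => by simp [wact]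
  | (k+1), q => by
      rw [List.replicate_succ]
      show wact a (List.replicate k true) (act a q true) = _
      rw [act_true, wact_replicate a k]
      push_cast
      ring

variable {a : ZMod n → ZMod n} {r : ZMod n}

theorem a_ne_zero (hrange : Set.range a = {(0 : ZMod n)}ᶜ) (x : ZMod n) : a x ≠ 0 := by
  have hx : a x ∈ Set.range a := ⟨x, rfl⟩
  rw [hrange] at hx
  simpa using hx

theorem a_surj (hrange : Set.range a = {(0 : ZMod n)}ᶜ) {q : ZMod n} (hq : q ≠ 0) :
    ∃ x, a x = q := by
  have : q ∈ Set.range a := by rw [hrange]; simpa using hq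
  exact this

theorem ncard_compl_singleton (hn : 2 ≤ n) (z : ZMod n) :
    ({z}ᶜ : Set (ZMod n)).ncard = n - 1 := by
  haveI : NeZero n := ⟨by omega⟩
  have h := Set.ncard_add_ncard_compl ({z} : Set (ZMod n))
  rw [Set.ncard_singleton, Nat.card_eq_fintype_card, ZMod.card] at h
  omega

theorem ncard_compl_pair (hn : 2 ≤ n) {e f : ZMod n} (hef : e ≠ f) :
    ({e, f}ᶜ : Set (ZMod n)).ncard = n - 2 := by
  haveI : NeZero n := ⟨by omega⟩
  have h := Set.ncard_add_ncard_compl ({e, f} : Set (ZMod n))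
  rw [Set.ncard_pair hef, Nat.card_eq_fintype_card, ZMod.card] at h
  omega

/-- the only collision of `a` is the pair `{0, r}`. -/
theorem collision (hn : 2 ≤ n) (hrange : Set.range a = {(0 : ZMod n)}ᶜ)
    (hr0 : r ≠ 0) (hra : a r = a 0) :
    ∀ x y : ZMod n, x ≠ y → a x = a y → (x = 0 ∧ y = r) ∨ (x = r ∧ y = 0) := by
  haveI : NeZero n := ⟨by omega⟩
  intro x y hxy haxy
  by_contra hcon
  push_neg at hcon
  -- find e with a collision partner o, e ∉ {0, r}
  obtain ⟨e, o, he0, her, hoe, haeo⟩ :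
      ∃ e o : ZMod n, e ≠ 0 ∧ e ≠ r ∧ o ≠ e ∧ a o = a e := by
    by_cases hx0 : x = 0
    · exact ⟨y, x, fun h => hxy (hx0.trans h.symm), hcon.1 hx0, hxy, haxy⟩
    · by_cases hxr : x = r
      · exact ⟨y, x, hcon.2 hxr, fun h => hxy (hxr.trans h.symm), hxy, haxy⟩
      · exact ⟨x, y, hx0, hxr, fun h => hxy h.symm, haxy.symm⟩
  have h0er : (0 : ZMod n) ∉ ({e, r} : Set (ZMod n)) := by
    simp only [mem_insert_iff, mem_singleton_iff]
    push_neg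
    exact ⟨fun h => he0 h.symm, fun h => hr0 h.symm⟩
  have hsub : Set.range a ⊆ a '' ({e, r}ᶜ : Set (ZMod n)) := by
    rintro q ⟨z, rfl⟩
    by_cases hz : z = e
    · subst hz
      by_cases hor : o = r
      · exact ⟨0, h0er, by rw [← hra, ← hor, haeo]⟩
      · refine ⟨o, ?_, haeo⟩
        simp only [mem_compl_iff, mem_insert_iff, mem_singleton_iff]
        push_neg
        exact ⟨hoe, hor⟩
    · by_cases hzr : z = r
      · subst hzr
        exact ⟨0, h0er, hra.symm⟩
      · refine ⟨z, ?_, rfl⟩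
        simp only [mem_compl_iff, mem_insert_iff, mem_singleton_iff]
        push_neg
        exact ⟨hz, hzr⟩
  have h1 : (Set.range a).ncard = n - 1 := by rw [hrange]; exact ncard_compl_singleton hn 0
  have h2 : (({e, r}ᶜ : Set (ZMod n))).ncard = n - 2 := ncard_compl_pair hn her
  have h3 : (a '' ({e, r}ᶜ : Set (ZMod n))).ncard ≤ n - 2 :=
    le_trans (Set.ncard_image_le (Set.toFinite _)) (le_of_eq h2)
  have h4 : n - 1 ≤ n - 2 :=
    h1 ▸ le_trans (Set.ncard_le_ncard hsub (Set.toFinite _)) h3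
  omega

theorem injOn_off_r (hn : 2 ≤ n) (hrange : Set.range a = {(0 : ZMod n)}ᶜ)
    (hr0 : r ≠ 0) (hra : a r = a 0) (A : Set (ZMod n)) :
    Set.InjOn a (A \ {r}) := by
  intro x hx y hy hxy
  by_contra hne
  rcases collision hn hrange hr0 hra x y hne hxy with ⟨_, h2⟩ | ⟨h1, _⟩
  · exact hy.2 h2
  · exact hx.2 h1

theorem ncard_image_ge (hn : 2 ≤ n) (hrange : Set.range a = {(0 : ZMod n)}ᶜ)
    (hr0 : r ≠ 0) (hra : a r = a 0) (A : Set (ZMod n)) :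
    A.ncard - 1 ≤ (a '' A).ncard := by
  haveI : NeZero n := ⟨by omega⟩
  have h1 : (a '' (A \ {r})).ncard = (A \ {r}).ncard :=
    Set.ncard_image_of_injOn (injOn_off_r hn hrange hr0 hra A)
  have h2 : (a '' (A \ {r})).ncard ≤ (a '' A).ncard :=
    Set.ncard_le_ncard (Set.image_mono (f := a) Set.diff_subset) (Set.toFinite _)
  have h3 : A.ncard - 1 ≤ (A \ {r}).ncard := by
    by_cases hrA : r ∈ A
    · have := Set.ncard_diff_singleton_add_one hrA (Set.toFinite _)
      omega
    · rw [Set.diff_singleton_eq_self hrA]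
      omega
  omega

theorem apreim (hn : 2 ≤ n) (hrange : Set.range a = {(0 : ZMod n)}ᶜ)
    (hr0 : r ≠ 0) (hra : a r = a 0)
    (H : AddSubgroup (ZMod n)) (hinv : ∀ h ∈ H, a h ∈ H) :
    ∀ x, a x ∈ H → x ∈ H := by
  haveI : NeZero n := ⟨by omega⟩
  intro x hax
  by_contra hx
  have h1 : a '' (insert x (H : Set (ZMod n))) ⊆ (H : Set (ZMod n)) \ {0} := by
    rintro q ⟨z, hz, rfl⟩
    refine ⟨?_, a_ne_zero hrange z⟩
    rcases hz with rfl | hz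
    · exact hax
    · exact hinv z hz
  have h2 : (a '' insert x (H : Set (ZMod n))).ncard ≤ ((H : Set (ZMod n)) \ {0}).ncard :=
    Set.ncard_le_ncard h1 (Set.toFinite _)
  have h3 : ((H : Set (ZMod n)) \ {0}).ncard + 1 = (H : Set (ZMod n)).ncard :=
    Set.ncard_diff_singleton_add_one H.zero_mem (Set.toFinite _)
  have h4 : (insert x (H : Set (ZMod n))).ncard = (H : Set (ZMod n)).ncard + 1 :=
    Set.ncard_insert_of_notMem hx (Set.toFinite _)
  have h5 := ncard_image_ge hn hrange hr0 hra (insert x (H : Set (ZMod n)))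
  omega

/-- Key invariant for necessity: no word's range is the complement of a coset of an
`a`-invariant subgroup. -/
theorem not_reach_coset_compl (hn : 2 ≤ n) (hrange : Set.range a = {(0 : ZMod n)}ᶜ)
    (hr0 : r ≠ 0) (hra : a r = a 0)
    (H : AddSubgroup (ZMod n)) (hinv : ∀ h ∈ H, a h ∈ H) :
    ∀ (w : List Bool) (g : ZMod n),
      Set.range (wact a w) ≠ {z : ZMod n | z - g ∈ H}ᶜ := by
  intro w
  induction w using List.reverseRecOn with
  | nil =>
    intro g h
    have hg : g ∈ Set.range (wact a []) := ⟨g, rfl⟩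
    rw [h] at hg
    exact hg (by simpa using H.zero_mem)
  | append_singleton w c ih =>
    intro g h
    cases c with
    | true =>
      apply ih (g - 1)
      have key : ∀ z : ZMod n,
          z ∈ Set.range (wact a w) ↔ z + 1 ∈ Set.range (wact a (w ++ [true])) := by
        intro z
        constructor
        · rintro ⟨x, hx⟩; exact ⟨x, by rw [wact_snoc_true, hx]⟩
        · rintro ⟨x, hx⟩; rw [wact_snoc_true] at hx; exact ⟨x, by exact add_right_cancel hx⟩
      ext z
      rw [key z, h]
      simp only [mem_compl_iff, mem_setOf_eq]
      have : z + 1 - g = z - (g - 1) := by ring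
      rw [this]
    | false =>
      have himg : Set.range (wact a (w ++ [false])) = a '' Set.range (wact a w) := by
        ext q
        constructor
        · rintro ⟨x, hx⟩
          exact ⟨wact a w x, ⟨x, rfl⟩, by rw [← hx, wact_snoc_false]⟩
        · rintro ⟨z, ⟨x, hx⟩, hz⟩
          exact ⟨x, by rw [wact_snoc_false, hx, hz]⟩
      rw [himg] at h
      have h0T : (0 : ZMod n) ∉ a '' Set.range (wact a w) := by
        rintro ⟨z, _, hz⟩
        exact a_ne_zero hrange z hz
      have hgH : g ∈ H := by
        by_contra hg
        have h0 : (0 : ZMod n) ∈ {z : ZMod n | z - g ∈ H}ᶜ := by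
          simp only [mem_compl_iff, mem_setOf_eq, zero_sub]
          intro hmem
          exact hg (by simpa using H.neg_mem hmem)
        rw [← h] at h0
        exact h0T h0
      have hU : {z : ZMod n | z - g ∈ H}ᶜ = {z : ZMod n | z - 0 ∈ H}ᶜ := by
        ext z
        simp only [mem_compl_iff, mem_setOf_eq, sub_zero]
        constructor
        · intro h1 h2
          exact h1 (H.sub_mem h2 hgH)
        · intro h1 h2
          apply h1
          have := H.add_mem h2 hgH
          simpa using this
      rw [hU] at h
      apply ih 0
      ext t
      simp only [mem_compl_iff, mem_setOf_eq, sub_zero]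
      constructor
      · intro htT htH
        have hat : a t ∈ a '' Set.range (wact a w) := mem_image_of_mem a htT
        rw [h] at hat
        simp only [mem_compl_iff, mem_setOf_eq, sub_zero] at hat
        exact hat (hinv t htH)
      · intro htH
        have hat : a t ∉ H := fun hmem => htH (apreim hn hrange hr0 hra H hinv t hmem)
        have hmem : a t ∈ {z : ZMod n | z - 0 ∈ H}ᶜ := by
          simpa only [mem_compl_iff, mem_setOf_eq, sub_zero] using hat
        rw [← h] at hmem
        obtain ⟨z, hzT, hza⟩ := hmem
        have hz : z = t := by
          by_contra hne
          rcases collision hn hrange hr0 hra z t hne hza with ⟨hz0, _⟩ | ⟨_, ht0⟩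
          · have : a z ∈ H := by rw [hz0]; exact hinv 0 H.zero_mem
            rw [hza] at this
            exact hat this
          · exact htH (by rw [ht0]; exact H.zero_mem)
        rwa [← hz]

/-! ## Sufficiency -/

theorem s_mem_D1 (hn : 2 ≤ n) (hrange : Set.range a = {(0 : ZMod n)}ᶜ)
    (hr0 : r ≠ 0) (hra : a r = a 0) : a 0 ∈ D1 a := by
  refine ⟨[false], ?_, ?_⟩
  · ext q
    simp only [excl, mem_setOf_eq, mem_singleton_iff]
    constructor
    · intro hq
      by_contra h0
      obtain ⟨x, hx⟩ := a_surj hrange h0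
      exact hq x (by rw [show wact a [false] x = a x from rfl, hx])
    · rintro rfl p
      rw [show wact a [false] p = a p from rfl]
      exact a_ne_zero hrange p
  · ext p
    simp only [dupl, mem_setOf_eq, mem_singleton_iff]
    constructor
    · rintro ⟨q₁, q₂, hq, h1, h2⟩
      rw [show wact a [false] q₁ = a q₁ from rfl] at h1
      rw [show wact a [false] q₂ = a q₂ from rfl] at h2
      rcases collision hn hrange hr0 hra q₁ q₂ hq (h1.trans h2.symm) with ⟨h, _⟩ | ⟨h, _⟩
      · rw [← h1, h]
      · rw [← h1, h, hra]
    · rintro rfl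
      exact ⟨r, 0, hr0, by rw [show wact a [false] r = a r from rfl, hra], rfl⟩

/-- A set is expandable if some word has all of `S` in its range and a duplicate point
inside `S`. -/
def Expandable (a : ZMod n → ZMod n) (S : Set (ZMod n)) : Prop :=
  ∃ (w : List Bool) (p : ZMod n), p ∈ S ∧
    (∃ u v, u ≠ v ∧ wact a w u = p ∧ wact a w v = p) ∧
    ∀ q ∈ S, ∃ z, wact a w z = q

theorem expandable_of_d1 {d : ZMod n} {S : Set (ZMod n)} (hd : d ∈ D1 a)
    (h0S : (0 : ZMod n) ∉ S) (hdS : d ∈ S) : Expandable a S := by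
  obtain ⟨w, hexcl, hdupl⟩ := hd
  have hdup : d ∈ dupl a w := by rw [hdupl]; rfl
  obtain ⟨u, v, huv, h1, h2⟩ := hdup
  refine ⟨w, d, hdS, ⟨u, v, huv, h1, h2⟩, ?_⟩
  intro q hq
  have hq0 : q ≠ 0 := fun h => h0S (h ▸ hq)
  by_contra hno
  push_neg at hno
  have hmem : q ∈ excl a w := fun p => hno p
  rw [hexcl] at hmem
  exact hq0 hmem

def Failing (a : ZMod n → ZMod n) (S : Set (ZMod n)) : Prop :=
  S.Nonempty ∧ S ≠ univ ∧ ¬ Expandable a S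

inductive Fam (a : ZMod n → ZMod n) (S₀ : Set (ZMod n)) : Set (ZMod n) → Prop
  | base : Fam a S₀ S₀
  | shift (S : Set (ZMod n)) (t : ZMod n) : Fam a S₀ S → Fam a S₀ ((fun z => z + t) ⁻¹' S)
  | pre (S : Set (ZMod n)) : Fam a S₀ S → (0 : ZMod n) ∉ S → Fam a S₀ (a ⁻¹' S)

theorem failing_shift (hn : 2 ≤ n) (S : Set (ZMod n)) (t : ZMod n)
    (hf : Failing a S) : Failing a ((fun z => z + t) ⁻¹' S) := by
  haveI : NeZero n := ⟨by omega⟩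
  obtain ⟨⟨σ, hσ⟩, hne, hexp⟩ := hf
  refine ⟨⟨σ - t, by simp only [mem_preimage, sub_add_cancel]; exact hσ⟩, ?_, ?_⟩
  · intro h
    obtain ⟨c, hc⟩ : ∃ c, c ∉ S := by
      by_contra h'
      push_neg at h'
      exact hne (eq_univ_iff_forall.mpr h')
    have hcc : c - t ∈ (fun z => z + t) ⁻¹' S := h ▸ mem_univ _
    simp only [mem_preimage, sub_add_cancel] at hcc
    exact hc hcc
  · rintro ⟨w, p, hp, ⟨u, v, huv, h1, h2⟩, hr⟩
    apply hexp
    simp only [mem_preimage] at hp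
    refine ⟨w ++ List.replicate t.val true, p + t, hp, ⟨u, v, huv, ?_, ?_⟩, ?_⟩
    · rw [wact_append, wact_replicate, h1, ZMod.natCast_zmod_val]
    · rw [wact_append, wact_replicate, h2, ZMod.natCast_zmod_val]
    · intro q hq
      have hqt : q - t ∈ (fun z => z + t) ⁻¹' S := by
        simp only [mem_preimage, sub_add_cancel]; exact hq
      obtain ⟨z, hz⟩ := hr (q - t) hqt
      refine ⟨z, ?_⟩
      rw [wact_append, wact_replicate, hz, ZMod.natCast_zmod_val, sub_add_cancel]

theorem failing_pre (hn : 2 ≤ n) (hrange : Set.range a = {(0 : ZMod n)}ᶜ)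
    (hr0 : r ≠ 0) (hra : a r = a 0) (S : Set (ZMod n)) (h0 : (0 : ZMod n) ∉ S)
    (hf : Failing a S) : Failing a (a ⁻¹' S) := by
  obtain ⟨⟨σ, hσ⟩, hne, hexp⟩ := hf
  have hσ0 : σ ≠ 0 := fun h => h0 (h ▸ hσ)
  obtain ⟨x, hx⟩ := a_surj hrange hσ0
  refine ⟨⟨x, by rw [mem_preimage, hx]; exact hσ⟩, ?_, ?_⟩
  · intro h
    apply hexp
    have hS : ∀ q : ZMod n, q ≠ 0 → q ∈ S := by
      intro q hq
      obtain ⟨x', hx'⟩ := a_surj hrange hq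
      have : x' ∈ a ⁻¹' S := h ▸ mem_univ _
      rwa [mem_preimage, hx'] at this
    refine ⟨[false], a 0, hS _ (a_ne_zero hrange 0), ⟨r, 0, hr0, ?_, rfl⟩, ?_⟩
    · rw [show wact a [false] r = a r from rfl, hra]
    · intro q hq
      have hq0 : q ≠ 0 := fun h' => h0 (h' ▸ hq)
      obtain ⟨x', hx'⟩ := a_surj hrange hq0
      exact ⟨x', hx'⟩
  · rintro ⟨w, p, hp, ⟨u, v, huv, h1, h2⟩, hr⟩
    apply hexp
    rw [mem_preimage] at hp
    refine ⟨w ++ [false], a p, hp, ⟨u, v, huv, by rw [wact_snoc_false, h1],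
      by rw [wact_snoc_false, h2]⟩, ?_⟩
    intro q hq
    have hq0 : q ≠ 0 := fun h' => h0 (h' ▸ hq)
    obtain ⟨x', hx'⟩ := a_surj hrange hq0
    obtain ⟨z, hz⟩ := hr x' (by rwa [mem_preimage, hx'])
    exact ⟨z, by rw [wact_snoc_false, hz, hx']⟩

theorem fam_failing (hn : 2 ≤ n) (hrange : Set.range a = {(0 : ZMod n)}ᶜ)
    (hr0 : r ≠ 0) (hra : a r = a 0) {S₀ : Set (ZMod n)} (h0 : Failing a S₀) :
    ∀ T, Fam a S₀ T → Failing a T := by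
  intro T hT
  induction hT with
  | base => exact h0
  | shift S t _ ih => exact failing_shift hn S t ih
  | pre S _ h0S ih => exact failing_pre hn hrange hr0 hra S h0S ih

theorem all_expandable (hn : 2 ≤ n) (hrange : Set.range a = {(0 : ZMod n)}ᶜ)
    (hr0 : r ≠ 0) (hra : a r = a 0)
    (Hyp : ∀ H : AddSubgroup (ZMod n),
      AddSubgroup.closure (D1 a) ≤ H → (∀ h ∈ H, a h ∈ H) → H = ⊤) :
    ∀ S : Set (ZMod n), S.Nonempty → S ≠ univ → Expandable a S := by
  intro S₀ hne hnu
  by_contra hexp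
  have hfail : Failing a S₀ := ⟨hne, hnu, hexp⟩
  haveI : NeZero n := ⟨by omega⟩
  set Kc : Set (ZMod n) := {z | ∀ T, Fam a S₀ T → (0 : ZMod n) ∉ T → z ∉ T} with hKc
  have hzero : (0 : ZMod n) ∈ Kc := fun T _ h0 hz => h0 hz
  have hadd : ∀ {z₁ z₂ : ZMod n}, z₁ ∈ Kc → z₂ ∈ Kc → z₁ + z₂ ∈ Kc := by
    intro z₁ z₂ h₁ h₂ T hT h0 hmem
    refine h₁ _ (Fam.shift T z₂ hT) ?_ ?_
    · intro h'
      simp only [mem_preimage, zero_add] at h'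
      exact h₂ T hT h0 h'
    · simpa only [mem_preimage] using hmem
  have hsmul : ∀ (m : ℕ) (z : ZMod n), z ∈ Kc → m • z ∈ Kc := by
    intro m z hz
    induction m with
    | zero => simpa using hzero
    | succ k ih => rw [succ_nsmul]; exact hadd ih hz
  have hneg : ∀ z ∈ Kc, -z ∈ Kc := by
    intro z hz
    have h1 : (n - 1) • z ∈ Kc := hsmul _ z hz
    have h2 : (n - 1) • z = -z := by
      have h3 : (n - 1) • z + z = 0 := by
        rw [← succ_nsmul, Nat.sub_add_cancel (by omega : 1 ≤ n), nsmul_eq_mul,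
          ZMod.natCast_self, zero_mul]
      exact eq_neg_of_add_eq_zero_left h3
    rwa [h2] at h1
  let K : AddSubgroup (ZMod n) :=
    { carrier := Kc
      zero_mem' := hzero
      add_mem' := fun h1 h2 => hadd h1 h2
      neg_mem' := fun h => hneg _ h }
  have hD1K : D1 a ⊆ Kc := by
    intro d hd T hT h0 hdT
    exact (fam_failing hn hrange hr0 hra hfail T hT).2.2 (expandable_of_d1 hd h0 hdT)
  have hainv : ∀ z ∈ K, a z ∈ K := by
    intro z hz
    show a z ∈ Kc
    intro T hT h0 haz
    have hzK : z ∈ Kc := hz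
    have hsK : a 0 ∈ Kc := hD1K (s_mem_D1 hn hrange hr0 hra)
    refine hzK (a ⁻¹' T) (Fam.pre T hT h0) ?_ (mem_preimage.mpr haz)
    intro h'
    rw [mem_preimage] at h'
    exact hsK T hT h0 h'
  have hle : AddSubgroup.closure (D1 a) ≤ K := (AddSubgroup.closure_le K).mpr hD1K
  have hK : K = ⊤ := Hyp K hle hainv
  obtain ⟨c, hc⟩ : ∃ c, c ∉ S₀ := by
    by_contra h'
    push_neg at h'
    exact hnu (eq_univ_iff_forall.mpr h')
  obtain ⟨σ, hσ⟩ := hne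
  have hT' : Fam a S₀ ((fun z => z + c) ⁻¹' S₀) := Fam.shift S₀ c Fam.base
  have h0T' : (0 : ZMod n) ∉ (fun z => z + c) ⁻¹' S₀ := by
    simp only [mem_preimage, zero_add]
    exact hc
  have hmem : σ - c ∈ (fun z => z + c) ⁻¹' S₀ := by
    simp only [mem_preimage, sub_add_cancel]
    exact hσ
  have hKmem : σ - c ∈ K := by rw [hK]; trivial
  have hKcmem : σ - c ∈ Kc := hKmem
  exact hKcmem _ hT' h0T' hmem

theorem expandable_CR (hn : 2 ≤ n)
    (hexp : ∀ S : Set (ZMod n), S.Nonempty → S ≠ univ → Expandable a S) :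
    CompletelyReachable a := by
  haveI : NeZero n := ⟨by omega⟩
  have hcc : ∀ (A : Set (ZMod n)), A.ncard + Aᶜ.ncard = n := by
    intro A
    have h := Set.ncard_add_ncard_compl A
    rwa [Nat.card_eq_fintype_card, ZMod.card] at h
  have main : ∀ (k : ℕ) (S : Set (ZMod n)), S.Nonempty → Sᶜ.ncard = k →
      ∃ w, Set.range (wact a w) = S := by
    intro k
    induction k using Nat.strong_induction_on with
    | _ k ih =>
      intro S hne hk
      by_cases hU : S = univ
      · refine ⟨[], ?_⟩
        rw [hU]
        ext z
        simp only [mem_range, mem_univ, iff_true]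
        exact ⟨z, rfl⟩
      · obtain ⟨w, p, hp, ⟨u, v, huv, h1, h2⟩, hr⟩ := hexp S hne hU
        set T : Set (ZMod n) := wact a w ⁻¹' S with hTdef
        have huT : u ∈ T := by rw [hTdef, mem_preimage, h1]; exact hp
        have hvT : v ∈ T := by rw [hTdef, mem_preimage, h2]; exact hp
        have himg : wact a w '' (T \ {u}) = S := by
          apply Subset.antisymm
          · rintro q ⟨z, ⟨hzT, _⟩, rfl⟩
            exact hzT
          · intro q hq
            obtain ⟨z, hz⟩ := hr q hq
            by_cases hzu : z = u
            · refine ⟨v, ⟨hvT, ?_⟩, ?_⟩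
              · simp only [mem_singleton_iff]
                exact fun h => huv h.symm
              · rw [h2, ← h1, ← hzu, hz]
            · refine ⟨z, ⟨?_, by simpa only [mem_singleton_iff] using hzu⟩, hz⟩
              rw [hTdef, mem_preimage, hz]
              exact hq
        have hcard1 : S.ncard < T.ncard := by
          have e1 : S.ncard ≤ (T \ {u}).ncard := by
            rw [← himg]
            exact Set.ncard_image_le (Set.toFinite _)
          have e2 : (T \ {u}).ncard + 1 = T.ncard :=
            Set.ncard_diff_singleton_add_one huT (Set.toFinite _)
          omega
        have hlt : Tᶜ.ncard < k := by
          have hS := hcc S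
          have hT := hcc T
          omega
        obtain ⟨w₀, hw₀⟩ := ih _ hlt T ⟨u, huT⟩ rfl
        refine ⟨w₀ ++ w, ?_⟩
        ext q
        simp only [mem_range]
        constructor
        · rintro ⟨x, hx⟩
          rw [wact_append] at hx
          have hxT : wact a w₀ x ∈ T := hw₀ ▸ mem_range_self x
          rw [hTdef, mem_preimage] at hxT
          rwa [hx] at hxT
        · intro hq
          obtain ⟨z, hz⟩ := hr q hq
          have hzT : z ∈ T := by rw [hTdef, mem_preimage, hz]; exact hq
          rw [← hw₀] at hzT
          obtain ⟨x, hx⟩ := hzT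
          exact ⟨x, by rw [wact_append, hx, hz]⟩
  intro S hne
  exact main Sᶜ.ncard S hne rfl

end CRAux

theorem completely_reachable_iff_H1_version {n : ℕ} (hn : 2 ≤ n)
    (a : ZMod n → ZMod n) (hstd : Standardized a) :
    CompletelyReachable a ↔
      (AddSubgroup.closure (D1 a) = ⊤ ∨
        ∀ H : AddSubgroup (ZMod n),
          AddSubgroup.closure (D1 a) ≤ H → (∀ h ∈ H, a h ∈ H) → H = ⊤) := by
  obtain ⟨hrange, r, hr0, hra⟩ := hstd
  constructor
  · intro hCR
    right
    intro H hle hinv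
    by_contra hH
    obtain ⟨z0, hz0⟩ : ∃ z, z ∉ H := by
      by_contra h'
      push_neg at h'
      exact hH ((AddSubgroup.eq_top_iff' H).mpr h')
    have hne : ({z : ZMod n | z - 0 ∈ H}ᶜ).Nonempty := by
      refine ⟨z0, ?_⟩
      simp only [Set.mem_compl_iff, Set.mem_setOf_eq, sub_zero]
      exact hz0
    obtain ⟨w, hw⟩ := hCR _ hne
    exact CRAux.not_reach_coset_compl hn hrange hr0 hra H hinv w 0 hw
  · intro hRHS
    have Hyp : ∀ H : AddSubgroup (ZMod n),
        AddSubgroup.closure (D1 a) ≤ H → (∀ h ∈ H, a h ∈ H) → H = ⊤ := by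
      rcases hRHS with h | h
      · intro H hle _
        exact top_unique (h ▸ hle)
      · exact h
    exact CRAux.expandable_CR hn (CRAux.all_expandable hn hrange hr0 hra Hyp)
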